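/- Let 1 ≤ r < n, write x = (x₁, x₀) ∈ ℝʳ × ℝ^{n−r}, let B be an n×n real symmetric matrix, b ∈ ℝⁿ, k ∈ ℝ, Q(x) := xᵀBx + 2bᵀx − k, X := {x : Q(x) = 0}, X_≤ := {x : Q(x) ≤ 0} nonempty, and X₀,≤ := {x₀ ∈ ℝ^{n−r} : Q(0_r, x₀) ≤ 0}. (1) If X₀,≤ is nonempty, then inf{‖x₁‖² : x ∈ X_≤} = 0 and the set of minimisers of ‖x₁‖² over X_≤ is exactly {(0_r, x₀) : x₀ ∈ X₀,≤}. (2) If X₀,≤ is empty, then X is nonempty, inf{‖x₁‖² : x ∈ X_≤} = inf{‖x₁‖² : x ∈ X}, and the set of minimisers of ‖x₁‖² over X_≤ equals the set of minimisers of ‖x₁‖² over X. -/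

import Mathlib

open Matrix

private lemma dp_self_nonneg {n : Type*} [Fintype n] (v : n → ℝ) : 0 ≤ v ⬝ᵥ v :=
  Finset.sum_nonneg fun i _ => mul_self_nonneg (v i)

private lemma elim_comp_eq {r m : ℕ} (x : Fin r ⊕ Fin m → ℝ) :
    Sum.elim (x ∘ Sum.inl) (x ∘ Sum.inr) = x :=
  funext fun i => by cases i <;> rfl

/-- key IVT lemma -/
private lemma ivt_lemma {r m : ℕ}
    (B : Matrix (Fin r ⊕ Fin m) (Fin r ⊕ Fin m) ℝ) (b : Fin r ⊕ Fin m → ℝ) (k : ℝ)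
    (hX0 : ∀ x0 : Fin m → ℝ,
      ¬ ((Sum.elim (0 : Fin r → ℝ) x0) ⬝ᵥ B.mulVec (Sum.elim (0 : Fin r → ℝ) x0)
          + 2 * (b ⬝ᵥ Sum.elim (0 : Fin r → ℝ) x0) - k ≤ 0))
    (x : Fin r ⊕ Fin m → ℝ)
    (hx : x ⬝ᵥ B.mulVec x + 2 * (b ⬝ᵥ x) - k ≤ 0) :
    ∃ t : ℝ, t ∈ Set.Icc (0:ℝ) 1 ∧
      (Sum.elim (t • (x ∘ Sum.inl)) (x ∘ Sum.inr)) ⬝ᵥ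
          B.mulVec (Sum.elim (t • (x ∘ Sum.inl)) (x ∘ Sum.inr))
        + 2 * (b ⬝ᵥ Sum.elim (t • (x ∘ Sum.inl)) (x ∘ Sum.inr)) - k = 0 := by
  set Q : (Fin r ⊕ Fin m → ℝ) → ℝ := fun y => y ⬝ᵥ B.mulVec y + 2 * (b ⬝ᵥ y) - k with hQ
  have hQc : Continuous Q := by
    simp only [hQ, dotProduct, mulVec]
    fun_prop
  set φ : ℝ → (Fin r ⊕ Fin m → ℝ) := fun t => Sum.elim (t • (x ∘ Sum.inl)) (x ∘ Sum.inr) with hφ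
  have hφc : Continuous φ := by
    apply continuous_pi
    rintro (i | j)
    · exact (continuous_id.mul continuous_const : Continuous fun t : ℝ => t * x (Sum.inl i))
    · exact continuous_const
  have hf : Continuous (Q ∘ φ) := hQc.comp hφc
  have h1 : (Q ∘ φ) 1 ≤ 0 := by
    have : φ 1 = x := by rw [hφ]; simp [one_smul, elim_comp_eq]
    simp [Function.comp, this, hQ]
    simpa [hQ] using hx
  have h0 : 0 < (Q ∘ φ) 0 := by
    have : φ 0 = Sum.elim (0 : Fin r → ℝ) (x ∘ Sum.inr) := by rw [hφ]; simp
    rw [Function.comp_apply, this]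
    exact lt_of_not_ge (hX0 (x ∘ Sum.inr))
  have hsub : Set.Icc ((Q ∘ φ) 1) ((Q ∘ φ) 0) ⊆ (Q ∘ φ) '' Set.Icc 0 1 :=
    intermediate_value_Icc' (by norm_num) hf.continuousOn
  have h0mem : (0:ℝ) ∈ Set.Icc ((Q ∘ φ) 1) ((Q ∘ φ) 0) := ⟨h1, le_of_lt h0⟩
  obtain ⟨t, ht, hft⟩ := hsub h0mem
  exact ⟨t, ht, hft⟩

theorem stmt5 {r m : ℕ} (hr : 1 ≤ r) (hm : 1 ≤ m)
    (B : Matrix (Fin r ⊕ Fin m) (Fin r ⊕ Fin m) ℝ) (hB : B.IsSymm)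
    (b : Fin r ⊕ Fin m → ℝ) (k : ℝ) :
    let Q : (Fin r ⊕ Fin m → ℝ) → ℝ := fun x => x ⬝ᵥ B.mulVec x + 2 * (b ⬝ᵥ x) - k
    let L : (Fin r ⊕ Fin m → ℝ) → ℝ := fun x => (x ∘ Sum.inl) ⬝ᵥ (x ∘ Sum.inl)
    let X : Set (Fin r ⊕ Fin m → ℝ) := {x | Q x = 0}
    let Xle : Set (Fin r ⊕ Fin m → ℝ) := {x | Q x ≤ 0}
    let X0le : Set (Fin m → ℝ) := {x0 | Q (Sum.elim (0 : Fin r → ℝ) x0) ≤ 0}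
    Xle.Nonempty →
      ((X0le.Nonempty →
          sInf (L '' Xle) = 0 ∧
          {x ∈ Xle | ∀ y ∈ Xle, L x ≤ L y} = {x | ∃ x0 ∈ X0le, x = Sum.elim (0 : Fin r → ℝ) x0}) ∧
       (X0le = ∅ →
          X.Nonempty ∧
          sInf (L '' Xle) = sInf (L '' X) ∧
          {x ∈ Xle | ∀ y ∈ Xle, L x ≤ L y} = {x ∈ X | ∀ y ∈ X, L x ≤ L y})) := by
  intro Q L X Xle X0le hne
  have hLnonneg : ∀ x, 0 ≤ L x := fun x => dp_self_nonneg _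
  have hbdd : ∀ S : Set (Fin r ⊕ Fin m → ℝ), BddBelow (L '' S) := by
    intro S
    exact ⟨0, fun v ⟨x, _, hx⟩ => hx ▸ hLnonneg x⟩
  constructor
  · -- Part 1
    rintro ⟨x0, hx0⟩
    have hz0 : Sum.elim (0 : Fin r → ℝ) x0 ∈ Xle := hx0
    have hLz0 : L (Sum.elim (0 : Fin r → ℝ) x0) = 0 := by
      simp [L, dotProduct]
    constructor
    · apply le_antisymm
      · exact hLz0 ▸ csInf_le (hbdd Xle) ⟨_, hz0, rfl⟩
      · exact le_csInf ⟨_, Set.mem_image_of_mem L hz0⟩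
          (fun v ⟨x, _, hx⟩ => hx ▸ hLnonneg x)
    · ext x
      simp only [Set.mem_setOf_eq, Set.mem_sep_iff]
      constructor
      · rintro ⟨hxle, hmin⟩
        have hLx0 : L x = 0 :=
          le_antisymm (hLz0 ▸ hmin _ hz0) (hLnonneg x)
        have hx1 : x ∘ Sum.inl = 0 := dotProduct_self_eq_zero.mp hLx0
        refine ⟨x ∘ Sum.inr, ?_, ?_⟩
        · show Q (Sum.elim 0 (x ∘ Sum.inr)) ≤ 0
          rwa [← hx1, elim_comp_eq]
        · rw [← hx1, elim_comp_eq]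
      · rintro ⟨y0, hy0, rfl⟩
        refine ⟨hy0, fun y _ => ?_⟩
        have : L (Sum.elim (0 : Fin r → ℝ) y0) = 0 := by simp [L, dotProduct]
        rw [this]; exact hLnonneg y
  · -- Part 2
    intro hempty
    have hX0 : ∀ y0 : Fin m → ℝ, ¬ (Q (Sum.elim (0 : Fin r → ℝ) y0) ≤ 0) := by
      intro y0 h
      exact Set.eq_empty_iff_forall_notMem.mp hempty y0 h
    -- key: for every x ∈ Xle, there is z ∈ X with L z ≤ L x, and strict if Q x < 0 (unless contradiction)
    have key : ∀ x ∈ Xle, ∃ t : ℝ, t ∈ Set.Icc (0:ℝ) 1 ∧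
        Sum.elim (t • (x ∘ Sum.inl)) (x ∘ Sum.inr) ∈ X ∧
        L (Sum.elim (t • (x ∘ Sum.inl)) (x ∘ Sum.inr)) = t * (t * L x) := by
      intro x hx
      obtain ⟨t, ht, hft⟩ := ivt_lemma B b k hX0 x hx
      refine ⟨t, ht, hft, ?_⟩
      show (t • (x ∘ Sum.inl)) ⬝ᵥ (t • (x ∘ Sum.inl)) = t * (t * L x)
      rw [smul_dotProduct, dotProduct_smul, smul_eq_mul, smul_eq_mul]
    have hLle : ∀ x ∈ Xle, ∃ z ∈ X, L z ≤ L x := by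
      intro x hx
      obtain ⟨t, ⟨ht0, ht1⟩, hzX, hlz⟩ := key x hx
      refine ⟨_, hzX, ?_⟩
      rw [hlz]
      calc t * (t * L x) ≤ 1 * (1 * L x) := by
            apply mul_le_mul ht1 (mul_le_mul ht1 le_rfl (hLnonneg x) (by norm_num))
              (mul_nonneg ht0 (hLnonneg x)) (by norm_num)
        _ = L x := by ring
    have hXsubXle : X ⊆ Xle := fun z hz => le_of_eq hz
    obtain ⟨w, hw⟩ := hne
    obtain ⟨z0, hz0X, _⟩ := hLle w hw
    refine ⟨⟨z0, hz0X⟩, ?_, ?_⟩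
    · -- infima equal
      apply le_antisymm
      · exact csInf_le_csInf (hbdd Xle) ⟨_, Set.mem_image_of_mem L hz0X⟩
          (Set.image_mono (f := L) hXsubXle)
      · apply le_csInf ⟨_, Set.mem_image_of_mem L hw⟩
        rintro v ⟨x, hx, rfl⟩
        obtain ⟨z, hzX, hLz⟩ := hLle x hx
        exact le_trans (csInf_le (hbdd X) ⟨z, hzX, rfl⟩) hLz
    · -- minimiser sets equal
      ext x
      simp only [Set.mem_sep_iff]
      constructor
      · rintro ⟨hxle, hmin⟩
        have hxX : x ∈ X := by
          by_contra hxQ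
          have hQlt : Q x < 0 := lt_of_le_of_ne hxle hxQ
          obtain ⟨t, ⟨ht0, ht1⟩, hzX, hlz⟩ := key x hxle
          have htne : t ≠ 1 := by
            rintro rfl
            have : Q (Sum.elim ((1:ℝ) • (x ∘ Sum.inl)) (x ∘ Sum.inr)) = 0 := hzX
            rw [one_smul, elim_comp_eq] at this
            exact absurd this (ne_of_lt hQlt)
          have ht1' : t < 1 := lt_of_le_of_ne ht1 htne
          have hLxpos : 0 < L x := by
            rcases lt_or_eq_of_le (hLnonneg x) with h | h
            · exact h
            · exfalso
              have hx1 : x ∘ Sum.inl = 0 := dotProduct_self_eq_zero.mp h.symm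
              apply hX0 (x ∘ Sum.inr)
              rwa [← hx1, elim_comp_eq]
          have hlt : t * (t * L x) < L x := by
            have ht2 : t * t < 1 := by nlinarith
            nlinarith
          have := hmin _ (hXsubXle hzX)
          rw [hlz] at this
          linarith
        exact ⟨hxX, fun y hy => hmin y (hXsubXle hy)⟩
      · rintro ⟨hxX, hmin⟩
        refine ⟨hXsubXle hxX, fun y hy => ?_⟩
        obtain ⟨z, hzX, hLz⟩ := hLle y hy
        exact le_trans (hmin z hzX) hLz
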